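/- Let p ≥ 2, ν₀, ν₁ > 0, and let A, B be symmetric real 3×3 matrices such that M(τ) = τA + (1−τ)B is nonzero for every τ ∈ [0,1]. Then, with T(A) = 2(ν₀ + ν₁ |A|_F^{p-2}) A, one has the integral identity (T(A) − T(B)) : (A − B) = 2 ∫₀¹ [ (ν₀ + ν₁ |M(τ)|_F^{p−2}) |A − B|_F² + ν₁ (p−2) |M(τ)|_F^{p−4} ((A − B) : M(τ))² ] dτ. -/

import Mathlib

/-- Frobenius inner product of two real 3×3 matrices: `A : B = ∑ᵢⱼ Aᵢⱼ Bᵢⱼ`. -/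
noncomputable def frobInner (A B : Matrix (Fin 3) (Fin 3) ℝ) : ℝ :=
  ∑ i : Fin 3, ∑ j : Fin 3, A i j * B i j

/-- Frobenius norm `|A|_F = (A : A)^{1/2}`. -/
noncomputable def frobNorm (A : Matrix (Fin 3) (Fin 3) ℝ) : ℝ :=
  Real.sqrt (frobInner A A)

/-- The Ladyzhenskaya stress map `T(A) = 2 (ν₀ + ν₁ |A|_F^{p-2}) A`. -/
noncomputable def ladyT (p ν₀ ν₁ : ℝ) (A : Matrix (Fin 3) (Fin 3) ℝ) :
    Matrix (Fin 3) (Fin 3) ℝ :=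
  (2 * (ν₀ + ν₁ * frobNorm A ^ (p - 2))) • A

lemma frobInner_comm (A B : Matrix (Fin 3) (Fin 3) ℝ) : frobInner A B = frobInner B A := by
  simp [frobInner, mul_comm]

lemma frobInner_sub_left (A B C : Matrix (Fin 3) (Fin 3) ℝ) :
    frobInner (A - B) C = frobInner A C - frobInner B C := by
  simp [frobInner, sub_mul, Finset.sum_sub_distrib]

lemma frobInner_smul_left (c : ℝ) (A B : Matrix (Fin 3) (Fin 3) ℝ) :
    frobInner (c • A) B = c * frobInner A B := by
  simp [frobInner, Finset.mul_sum, mul_assoc]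

lemma frobInner_nonneg (A : Matrix (Fin 3) (Fin 3) ℝ) : 0 ≤ frobInner A A :=
  Finset.sum_nonneg fun _ _ => Finset.sum_nonneg fun _ _ => mul_self_nonneg _

lemma frobInner_pos {A : Matrix (Fin 3) (Fin 3) ℝ} (h : A ≠ 0) : 0 < frobInner A A := by
  obtain ⟨i, j, hij⟩ : ∃ i j, A i j ≠ 0 := by
    by_contra hc; push_neg at hc
    exact h (Matrix.ext fun i j => hc i j)
  refine Finset.sum_pos' (fun i _ => Finset.sum_nonneg fun j _ => mul_self_nonneg _)
    ⟨i, Finset.mem_univ i, Finset.sum_pos' (fun j _ => mul_self_nonneg _)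
      ⟨j, Finset.mem_univ j, mul_self_pos.2 hij⟩⟩

lemma frobNorm_rpow (A : Matrix (Fin 3) (Fin 3) ℝ) (r : ℝ) :
    frobNorm A ^ r = frobInner A A ^ (r / 2) := by
  rw [frobNorm, Real.sqrt_eq_rpow, ← Real.rpow_mul (frobInner_nonneg A)]
  ring_nf

lemma frobNorm_sq (A : Matrix (Fin 3) (Fin 3) ℝ) : frobNorm A ^ 2 = frobInner A A :=
  Real.sq_sqrt (frobInner_nonneg A)

lemma frobInner_expand (B D : Matrix (Fin 3) (Fin 3) ℝ) (τ : ℝ) :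
    frobInner (B + τ • D) (B + τ • D) =
      frobInner B B + 2 * τ * frobInner B D + τ ^ 2 * frobInner D D := by
  simp only [frobInner, Fin.sum_univ_three, Matrix.add_apply, Matrix.smul_apply, smul_eq_mul]
  ring

lemma frobInner_right_expand (B D : Matrix (Fin 3) (Fin 3) ℝ) (τ : ℝ) :
    frobInner D (B + τ • D) = frobInner B D + τ * frobInner D D := by
  simp only [frobInner, Fin.sum_univ_three, Matrix.add_apply, Matrix.smul_apply, smul_eq_mul]
  ring

/-- Integral identity for the Ladyzhenskaya stress: with `M(τ) = τA + (1−τ)B` nonzero on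
`[0,1]`, one has
`(T(A) − T(B)) : (A − B)
  = 2 ∫₀¹ (ν₀ + ν₁|M|_F^{p−2}) |A−B|_F² + ν₁ (p−2) |M|_F^{p−4} ((A−B) : M)² dτ`. -/
theorem ladyT_integral_identity (p ν₀ ν₁ : ℝ) (hp : 2 ≤ p) (hν₀ : 0 < ν₀) (hν₁ : 0 < ν₁)
    (A B : Matrix (Fin 3) (Fin 3) ℝ) (hA : A.IsSymm) (hB : B.IsSymm)
    (hM : ∀ τ ∈ Set.Icc (0 : ℝ) 1, τ • A + (1 - τ) • B ≠ 0) :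
    frobInner (ladyT p ν₀ ν₁ A - ladyT p ν₀ ν₁ B) (A - B) =
      2 * ∫ τ in (0 : ℝ)..1,
        ((ν₀ + ν₁ * frobNorm (τ • A + (1 - τ) • B) ^ (p - 2)) * frobNorm (A - B) ^ 2 +
          ν₁ * (p - 2) * frobNorm (τ • A + (1 - τ) • B) ^ (p - 4) *
            (frobInner (A - B) (τ • A + (1 - τ) • B)) ^ 2) := by
  set D := A - B with hD
  set c0 := frobInner B B with hc0
  set c1 := frobInner B D with hc1
  set c2 := frobInner D D with hc2
  have hMeq : ∀ τ : ℝ, τ • A + (1 - τ) • B = B + τ • D := by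
    intro τ; rw [hD]; module
  have hAeq : A = B + (1 : ℝ) • D := by rw [hD]; module
  have hQ : ∀ τ : ℝ, frobInner (B + τ • D) (B + τ • D) = c0 + 2 * τ * c1 + τ ^ 2 * c2 := by
    intro τ; rw [frobInner_expand, ← hc0, ← hc1, ← hc2]
  have hR : ∀ τ : ℝ, frobInner D (B + τ • D) = c1 + τ * c2 := by
    intro τ; rw [frobInner_right_expand, ← hc1, ← hc2]
  have hQpos : ∀ τ ∈ Set.Icc (0 : ℝ) 1, 0 < c0 + 2 * τ * c1 + τ ^ 2 * c2 := by
    intro τ hτ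
    have h := hM τ hτ
    rw [hMeq] at h
    have := frobInner_pos h
    rwa [hQ] at this
  set Q : ℝ → ℝ := fun τ => c0 + 2 * τ * c1 + τ ^ 2 * c2 with hQdef
  set e := (p - 2) / 2 with he
  set F : ℝ → ℝ := fun τ => 2 * (ν₀ + ν₁ * Q τ ^ e) * (c1 + τ * c2) with hF
  set I : ℝ → ℝ := fun τ =>
    2 * ((ν₀ + ν₁ * Q τ ^ e) * c2 + ν₁ * (p - 2) * Q τ ^ ((p - 4) / 2) * (c1 + τ * c2) ^ 2)
    with hI
  have hderiv : ∀ τ ∈ Set.uIcc (0 : ℝ) 1, HasDerivAt F (I τ) τ := by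
    intro τ hτ
    rw [Set.uIcc_of_le zero_le_one] at hτ
    have hQd : HasDerivAt Q (2 * c1 + 2 * τ * c2) τ := by
      rw [hQdef]
      have ha : HasDerivAt (fun t : ℝ => 2 * t * c1) (2 * c1) τ := by
        simpa using (((hasDerivAt_id τ).const_mul 2).mul_const c1)
      have hb : HasDerivAt (fun t : ℝ => t ^ 2 * c2) (2 * τ ^ 1 * c2) τ := by
        simpa using ((hasDerivAt_pow 2 τ).mul_const c2)
      have := (ha.const_add c0).add hb
      refine this.congr_deriv ?_
      ring
    have hrp : HasDerivAt (fun t => Q t ^ e)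
        ((2 * c1 + 2 * τ * c2) * e * Q τ ^ (e - 1)) τ :=
      hQd.rpow_const (Or.inl (ne_of_gt (hQpos τ hτ)))
    have hlin : HasDerivAt (fun t : ℝ => c1 + t * c2) c2 τ := by
      simpa using ((hasDerivAt_id τ).mul_const c2).const_add c1
    have hmain := (((hrp.const_mul ν₁).const_add ν₀).const_mul 2).mul hlin
    have hexp : e - 1 = (p - 4) / 2 := by rw [he]; ring
    rw [hF]
    refine hmain.congr_deriv ?_
    rw [hI, hexp]; ring
  have hQc : ContinuousOn Q (Set.Icc (0 : ℝ) 1) := by rw [hQdef]; fun_prop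
  have h1 : ContinuousOn (fun τ => Q τ ^ e) (Set.Icc (0 : ℝ) 1) :=
    hQc.rpow_const fun x hx => Or.inl (ne_of_gt (hQpos x hx))
  have h2 : ContinuousOn (fun τ => Q τ ^ ((p - 4) / 2)) (Set.Icc (0 : ℝ) 1) :=
    hQc.rpow_const fun x hx => Or.inl (ne_of_gt (hQpos x hx))
  have hlin : ContinuousOn (fun τ : ℝ => c1 + τ * c2) (Set.Icc (0 : ℝ) 1) := by fun_prop
  have hIcont : ContinuousOn I (Set.uIcc (0 : ℝ) 1) := by
    rw [Set.uIcc_of_le zero_le_one, hI]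
    exact continuousOn_const.mul
      (((continuousOn_const.add (continuousOn_const.mul h1)).mul continuousOn_const).add
        (((continuousOn_const.mul h2)).mul (hlin.pow 2)))
  have hint : IntervalIntegrable I MeasureTheory.volume 0 1 := hIcont.intervalIntegrable
  have key : (∫ τ in (0 : ℝ)..1, I τ) = F 1 - F 0 :=
    intervalIntegral.integral_eq_sub_of_hasDerivAt hderiv hint
  have hcongr : ∀ τ : ℝ,
      ((ν₀ + ν₁ * frobNorm (τ • A + (1 - τ) • B) ^ (p - 2)) * frobNorm D ^ 2 +
        ν₁ * (p - 2) * frobNorm (τ • A + (1 - τ) • B) ^ (p - 4) *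
          (frobInner D (τ • A + (1 - τ) • B)) ^ 2) = I τ / 2 := by
    intro τ
    rw [hMeq τ, frobNorm_rpow, frobNorm_rpow, frobNorm_sq, hQ τ, hR τ, ← hc2]
    simp only [hI, hQdef, he]
    ring
  have hFA : frobInner A A = c0 + 2 * c1 + c2 := by
    rw [hAeq, frobInner_expand, ← hc0, ← hc1, ← hc2]; ring
  have hAD : frobInner A D = c1 + c2 := by
    rw [frobInner_comm, hAeq]
    have := hR 1
    rw [this]; ring
  calc frobInner (ladyT p ν₀ ν₁ A - ladyT p ν₀ ν₁ B) D
      = F 1 - F 0 := by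
        rw [frobInner_sub_left]
        unfold ladyT
        rw [frobInner_smul_left, frobInner_smul_left, frobNorm_rpow, frobNorm_rpow,
          hFA, hAD, ← hc0, ← hc1, hF]
        simp only [hQdef, he]
        ring
    _ = 2 * ∫ τ in (0 : ℝ)..1,
        ((ν₀ + ν₁ * frobNorm (τ • A + (1 - τ) • B) ^ (p - 2)) * frobNorm D ^ 2 +
          ν₁ * (p - 2) * frobNorm (τ • A + (1 - τ) • B) ^ (p - 4) *
            (frobInner D (τ • A + (1 - τ) • B)) ^ 2) := by
        rw [intervalIntegral.integral_congr (g := fun τ => I τ / 2)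
          (fun τ _ => hcongr τ)]
        rw [intervalIntegral.integral_div, key]
        ring
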